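/- Let n ≥ 1, α > 0, and let u : ℝ² → ℝⁿ be harmonic on all of ℝ², α-homogeneous (u(λp) = λ^α u(p) for every λ > 0 and p ∈ ℝ²), and not identically zero. Then α is a positive integer d, and there exist vectors a, b ∈ ℝⁿ, not both zero, such that u(r cos θ, r sin θ) = r^d (a cos(dθ) + b sin(dθ)) for all r ≥ 0 and θ ∈ ℝ; that is, u is a homogeneous harmonic polynomial of degree d. -/

import Mathlib

open Real

def HarmonicOn {n : ℕ} (f : ℝ × ℝ → EuclideanSpace ℝ (Fin n)) (U : Set (ℝ × ℝ)) : Prop :=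
  ContDiffOn ℝ 2 f U ∧ ∀ x ∈ U,
    fderivWithin ℝ (fun y => fderivWithin ℝ f U y ((1 : ℝ), (0 : ℝ))) U x ((1 : ℝ), (0 : ℝ)) +
      fderivWithin ℝ (fun y => fderivWithin ℝ f U y ((0 : ℝ), (1 : ℝ))) U x ((0 : ℝ), (1 : ℝ)) = 0

lemma aux_ode {E : Type*} [NormedAddCommGroup E] [InnerProductSpace ℝ E] {α : ℝ} (hα : 0 < α)
    {g g1 : ℝ → E} (hg : ∀ t, HasDerivAt g (g1 t) t)
    (hg1 : ∀ t, HasDerivAt g1 (-(α ^ 2) • g t) t) :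
    ∀ t, g t = Real.cos (α * t) • g 0 + (α⁻¹ * Real.sin (α * t)) • g1 0 := by
  have hα' : α ≠ 0 := ne_of_gt hα
  set a := g 0
  set b := g1 0
  set h : ℝ → E := fun t => g t - Real.cos (α * t) • a - (α⁻¹ * Real.sin (α * t)) • b with hh
  set h1 : ℝ → E := fun t => g1 t + (α * Real.sin (α * t)) • a - Real.cos (α * t) • b with hh1
  have hcos : ∀ t, HasDerivAt (fun t => Real.cos (α * t)) (-(α * Real.sin (α * t))) t := by
    intro t
    have := (Real.hasDerivAt_cos (α * t)).comp t ((hasDerivAt_id t).const_mul α)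
    simpa [mul_comm, Function.comp_def] using this
  have hsin : ∀ t, HasDerivAt (fun t => Real.sin (α * t)) (α * Real.cos (α * t)) t := by
    intro t
    have := (Real.hasDerivAt_sin (α * t)).comp t ((hasDerivAt_id t).const_mul α)
    simpa [mul_comm, Function.comp_def] using this
  have hdh : ∀ t, HasDerivAt h (h1 t) t := by
    intro t
    have h2 := ((hcos t).smul_const a)
    have h3 := (((hsin t).const_mul α⁻¹).smul_const b)
    have := ((hg t).sub h2).sub h3
    convert this using 1
    · rfl
    simp only [hh1]
    match_scalars <;> field_simp
  have hdh1 : ∀ t, HasDerivAt h1 (-(α ^ 2) • h t) t := by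
    intro t
    have h2 := (((hsin t).const_mul α).smul_const a)
    have h3 := ((hcos t).smul_const b)
    have := ((hg1 t).add h2).sub h3
    convert this using 1
    · rfl
    simp only [hh]
    match_scalars <;> field_simp <;> ring
  -- energy
  set F : ℝ → ℝ := fun t => α ^ 2 * inner ℝ (h t) (h t) + inner ℝ (h1 t) (h1 t) with hF
  have hdF : ∀ t, HasDerivAt F 0 t := by
    intro t
    have h2 := (((hdh t).inner ℝ (hdh t)).const_mul (α ^ 2)).add ((hdh1 t).inner ℝ (hdh1 t))
    convert h2 using 1
    · rfl
    · rfl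
    · rfl
    simp only [inner_neg_left, inner_neg_right, inner_smul_left, inner_smul_right,
      real_inner_comm (h t) (h1 t)]
    ring_nf
    simp [real_inner_comm (h t) (h1 t)]
    ring
  have hFconst : ∀ t, F t = F 0 := by
    intro t
    have := is_const_of_deriv_eq_zero (f := F) (fun x => (hdF x).differentiableAt)
      (fun x => (hdF x).deriv) t 0
    exact this
  have hF0 : F 0 = 0 := by
    simp only [hF, hh, hh1]
    norm_num [a, b]
  have hzero : ∀ t, h t = 0 := by
    intro t
    have h1nn : (0:ℝ) ≤ inner ℝ (h1 t) (h1 t) := real_inner_self_nonneg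
    have h0nn : (0:ℝ) ≤ inner ℝ (h t) (h t) := real_inner_self_nonneg
    have hFt : F t = 0 := (hFconst t).trans hF0
    simp only [hF] at hFt
    have : inner ℝ (h t) (h t) = (0:ℝ) := by nlinarith [pow_pos hα 2]
    exact inner_self_eq_zero.mp this
  intro t
  have := hzero t
  simp only [hh, sub_eq_zero] at this
  rw [sub_eq_iff_eq_add] at this
  rw [this]
  abel

set_option maxHeartbeats 1000000 in
theorem statement9 {n : ℕ} (hn : 1 ≤ n) (α : ℝ) (hα : 0 < α)
    (u : ℝ × ℝ → EuclideanSpace ℝ (Fin n))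
    (hharm : HarmonicOn u Set.univ)
    (hhom : ∀ lam : ℝ, 0 < lam → ∀ x : ℝ × ℝ, u (lam • x) = lam ^ α • u x)
    (hnz : ∃ x : ℝ × ℝ, u x ≠ 0) :
    ∃ d : ℕ, 0 < d ∧ α = (d : ℝ) ∧
      ∃ a b : EuclideanSpace ℝ (Fin n), ¬(a = 0 ∧ b = 0) ∧
        ∀ r : ℝ, 0 ≤ r → ∀ θ : ℝ,
          u (r * Real.cos θ, r * Real.sin θ) =
            r ^ d • (Real.cos ((d : ℝ) * θ) • a + Real.sin ((d : ℝ) * θ) • b) := by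
  have hα' : α ≠ 0 := ne_of_gt hα
  obtain ⟨hC2', hlap'⟩ := hharm
  have hu2 : ContDiff ℝ 2 u := contDiffOn_univ.mp hC2'
  have hud : Differentiable ℝ u := hu2.differentiable (by norm_num)
  have hfd : ∀ y, HasFDerivAt u (fderiv ℝ u y) y := fun y => (hud y).hasFDerivAt
  have hderiv_cd : ContDiff ℝ 1 (fderiv ℝ u) := hu2.fderiv_right (by norm_num)
  have hderiv_d : Differentiable ℝ (fderiv ℝ u) := hderiv_cd.differentiable (by norm_num)
  set B := fun x => fderiv ℝ (fderiv ℝ u) x with hB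
  have hfd2 : ∀ x, HasFDerivAt (fderiv ℝ u) (B x) x := fun x => (hderiv_d x).hasFDerivAt
  have key : ∀ (v w x : ℝ × ℝ), fderiv ℝ (fun y => fderiv ℝ u y v) x w = B x w v := by
    intro v w x
    rw [show (fun y => fderiv ℝ u y v) = (fun y => (fderiv ℝ u y) ((fun _ : ℝ × ℝ => v) y))
        from rfl, fderiv_clm_apply (hderiv_d x) (differentiableAt_const v)]
    simp
    rfl
  have hsymm : ∀ x v w, B x v w = B x w v := fun x v w =>
    (hu2.contDiffAt.isSymmSndFDerivAt (by simp)) v w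
  have hlap : ∀ x : ℝ × ℝ, B x (1, 0) (1, 0) + B x (0, 1) (0, 1) = 0 := by
    intro x
    have h := hlap' x (Set.mem_univ x)
    simp only [fderivWithin_univ] at h
    rw [key, key] at h
    exact h
  have hrot : ∀ (x : ℝ × ℝ) (c s : ℝ), c ^ 2 + s ^ 2 = 1 →
      B x (c, s) (c, s) + B x (-s, c) (-s, c) = 0 := by
    intro x c s hcs
    have h1 : ((c, s) : ℝ × ℝ) = c • ((1 : ℝ), (0 : ℝ)) + s • ((0 : ℝ), (1 : ℝ)) := by
      simp [Prod.ext_iff]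
    have h2 : ((-s, c) : ℝ × ℝ) = (-s) • ((1 : ℝ), (0 : ℝ)) + c • ((0 : ℝ), (1 : ℝ)) := by
      simp [Prod.ext_iff]
    rw [h1, h2]
    simp only [map_add, map_smul, ContinuousLinearMap.add_apply, ContinuousLinearMap.smul_apply,
      ContinuousLinearMap.coe_smul', Pi.smul_apply]
    rw [hsymm x ((0 : ℝ), (1 : ℝ)) ((1 : ℝ), (0 : ℝ))]
    have expand : c • (c • B x (1,0) (1,0) + s • B x (1,0) (0,1)) +
        s • (c • B x (1,0) (0,1) + s • B x (0,1) (0,1)) +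
        ((-s) • ((-s) • B x (1,0) (1,0) + c • B x (1,0) (0,1)) +
        c • ((-s) • B x (1,0) (0,1) + c • B x (0,1) (0,1))) =
        (c ^ 2 + s ^ 2) • (B x (1,0) (1,0) + B x (0,1) (0,1)) := by
      match_scalars <;> ring
    rw [expand, hcs, one_smul, hlap x]
  -- polar data
  set p : ℝ → ℝ × ℝ := fun θ => (Real.cos θ, Real.sin θ) with hpdef
  set q : ℝ → ℝ × ℝ := fun θ => (-Real.sin θ, Real.cos θ) with hqdef
  set g : ℝ → EuclideanSpace ℝ (Fin n) := fun θ => u (p θ) with hgdef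
  set g1 : ℝ → EuclideanSpace ℝ (Fin n) := fun θ => fderiv ℝ u (p θ) (q θ) with hg1def
  have hp : ∀ θ, HasDerivAt p (q θ) θ := fun θ =>
    (Real.hasDerivAt_cos θ).prodMk (Real.hasDerivAt_sin θ)
  have hq : ∀ θ, HasDerivAt q (-(p θ)) θ := by
    intro θ
    have h := ((Real.hasDerivAt_sin θ).neg).prodMk (Real.hasDerivAt_cos θ)
    convert h using 1
    · rfl
    rfl
  have hg : ∀ θ, HasDerivAt g (g1 θ) θ := fun θ => (hfd (p θ)).comp_hasDerivAt θ (hp θ)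
  -- radial facts
  have hradial : ∀ θ, fderiv ℝ u (p θ) (p θ) = α • g θ ∧
      B (p θ) (p θ) (p θ) = (α * (α - 1)) • g θ := by
    intro θ
    set φ : ℝ → EuclideanSpace ℝ (Fin n) := fun t => fderiv ℝ u (t • p θ) (p θ) with hφdef
    have hline : ∀ t : ℝ, HasDerivAt (fun t : ℝ => t • p θ) (p θ) t := by
      intro t
      simpa using (hasDerivAt_id t).smul_const (p θ)
    have hcomp : ∀ t : ℝ, HasDerivAt (fun t : ℝ => u (t • p θ)) (φ t) t := fun t =>
      (hfd (t • p θ)).comp_hasDerivAt t (hline t)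
    have heq : ∀ t ∈ Set.Ioi (0 : ℝ), u (t • p θ) = t ^ α • g θ := fun t ht =>
      hhom t ht (p θ)
    have hφval : ∀ t ∈ Set.Ioi (0 : ℝ), φ t = (α * t ^ (α - 1)) • g θ := by
      intro t ht
      have h1 : HasDerivAt (fun t : ℝ => t ^ α • g θ) ((α * t ^ (α - 1)) • g θ) t :=
        (Real.hasDerivAt_rpow_const (Or.inl (ne_of_gt ht))).smul_const (g θ)
      have h2 : HasDerivAt (fun t : ℝ => t ^ α • g θ) (φ t) t := by
        apply (hcomp t).congr_of_eventuallyEq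
        exact Filter.eventuallyEq_of_mem (Ioi_mem_nhds ht) (fun s hs => (heq s hs).symm)
      exact (h2.unique h1)
    have hR1 : fderiv ℝ u (p θ) (p θ) = α • g θ := by
      have := hφval 1 (by norm_num)
      simpa [hφdef, Real.one_rpow] using this
    refine ⟨hR1, ?_⟩
    have hφd : HasDerivAt φ (B (p θ) (p θ) (p θ)) 1 := by
      have hA : HasDerivAt (fun t : ℝ => fderiv ℝ u (t • p θ)) (B ((1:ℝ) • p θ) (p θ)) 1 :=
        (hfd2 ((1:ℝ) • p θ)).comp_hasDerivAt 1 (hline 1)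
      have := hA.clm_apply (hasDerivAt_const 1 (p θ))
      simpa [hφdef, one_smul] using this
    have hφd2 : HasDerivAt φ ((α * (α - 1)) • g θ) 1 := by
      have h1 : HasDerivAt (fun t : ℝ => (α * t ^ (α - 1)) • g θ)
          ((α * ((α - 1) * (1:ℝ) ^ (α - 1 - 1))) • g θ) 1 := by
        exact ((Real.hasDerivAt_rpow_const (p := α - 1) (Or.inl one_ne_zero)).const_mul
          α).smul_const (g θ)
      have h2 : HasDerivAt φ ((α * ((α - 1) * (1:ℝ) ^ (α - 1 - 1))) • g θ) 1 := by
        apply h1.congr_of_eventuallyEq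
        exact Filter.eventuallyEq_of_mem (Ioi_mem_nhds (by norm_num : (1:ℝ) ∈ Set.Ioi 0))
          (fun s hs => hφval s hs)
      simpa [Real.one_rpow] using h2
    exact hφd.unique hφd2
  have hg1 : ∀ θ, HasDerivAt g1 (-(α ^ 2) • g θ) θ := by
    intro θ
    have hA : HasDerivAt (fun θ => fderiv ℝ u (p θ)) (B (p θ) (q θ)) θ :=
      (hfd2 (p θ)).comp_hasDerivAt θ (hp θ)
    have hcq := hA.clm_apply (hq θ)
    have hBq : B (p θ) (q θ) (q θ) = -((α * (α - 1)) • g θ) := by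
      have hr := hrot (p θ) (Real.cos θ) (Real.sin θ) (by
        have := Real.sin_sq_add_cos_sq θ; linarith)
      have hpq : ((Real.cos θ, Real.sin θ) : ℝ × ℝ) = p θ := rfl
      have hqq : ((-Real.sin θ, Real.cos θ) : ℝ × ℝ) = q θ := rfl
      rw [hpq, hqq, (hradial θ).2] at hr
      linear_combination (norm := module) hr
    have : B (p θ) (q θ) (q θ) + (fderiv ℝ u (p θ)) (-(p θ)) = -(α ^ 2) • g θ := by
      rw [hBq, map_neg, (hradial θ).1]
      match_scalars; ring
    rw [← this]
    exact hcq
  -- solve the ODE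
  set a : EuclideanSpace ℝ (Fin n) := g 0 with hadef
  set b : EuclideanSpace ℝ (Fin n) := α⁻¹ • g1 0 with hbdef
  have hgform : ∀ t, g t = Real.cos (α * t) • a + Real.sin (α * t) • b := by
    intro t
    have h := aux_ode hα hg hg1 t
    rw [h, hadef, hbdef, smul_smul]
    module
  -- u vanishes at the origin
  have hu0 : u 0 = 0 := by
    have h2 := hhom 2 (by norm_num) 0
    rw [smul_zero] at h2
    by_contra h
    have h3 : ((2:ℝ) ^ α - 1) • u 0 = 0 := by
      rw [sub_smul, one_smul, ← h2, sub_self]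
    rcases smul_eq_zero.mp h3 with h4 | h4
    · have : (1:ℝ) < (2:ℝ) ^ α := by
        calc (1:ℝ) = (2:ℝ) ^ (0:ℝ) := by norm_num
        _ < (2:ℝ) ^ α := Real.rpow_lt_rpow_of_exponent_lt (by norm_num) hα
      linarith [sub_eq_zero.mp h4]
    · exact h h4
  -- a, b not both zero
  have hab : ¬(a = 0 ∧ b = 0) := by
    rintro ⟨ha, hb⟩
    have hgz : ∀ t, g t = 0 := by intro t; rw [hgform t, ha, hb]; simp
    obtain ⟨x, hx⟩ := hnz
    apply hx
    rcases eq_or_ne x 0 with rfl | hx0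
    · exact hu0
    · set z : ℂ := ⟨x.1, x.2⟩ with hz
      have hz0 : z ≠ 0 := by
        intro h
        apply hx0
        have h2 : x.1 = 0 ∧ x.2 = 0 := by simpa [hz, Complex.ext_iff] using h
        exact Prod.ext h2.1 h2.2
      have habs : 0 < ‖z‖ := norm_pos_iff.mpr hz0
      have hxp : x = ‖z‖ • p z.arg := by
        have h1 := Complex.norm_mul_cos_arg z
        have h2 := Complex.norm_mul_sin_arg z
        exact Prod.ext (by simpa [hpdef, hz] using h1.symm) (by simpa [hpdef, hz] using h2.symm)
      rw [hxp, hhom _ habs,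
        show u (p z.arg) = (0 : EuclideanSpace ℝ (Fin n)) from hgz z.arg, smul_zero]
  -- periodicity forces α integral
  have hper : ∀ θ, g (θ + 2 * π) = g θ := by
    intro θ
    simp [hgdef, hpdef, Real.cos_add_two_pi, Real.sin_add_two_pi]
  have e1 : (Real.cos (α * (2 * π)) - 1) • a + Real.sin (α * (2 * π)) • b = 0 := by
    have h := hper 0
    rw [zero_add, hgform (2 * π), hgform 0] at h
    simp only [mul_zero, Real.cos_zero, Real.sin_zero, one_smul, zero_smul, add_zero] at h
    linear_combination (norm := module) h
  have e2 : (-Real.sin (α * (2 * π))) • a + (Real.cos (α * (2 * π)) - 1) • b = 0 := by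
    have h := hper (π / (2 * α))
    rw [hgform, hgform] at h
    have harg : α * (π / (2 * α)) = π / 2 := by field_simp
    have harg2 : α * (π / (2 * α) + 2 * π) = π / 2 + α * (2 * π) := by field_simp
    rw [harg2, harg] at h
    simp only [Real.cos_add, Real.sin_add, Real.cos_pi_div_two, Real.sin_pi_div_two,
      zero_mul, one_mul, zero_sub, zero_add, neg_smul] at h
    linear_combination (norm := module) h
  set C : ℝ := Real.cos (α * (2 * π)) with hCdef
  set S : ℝ := Real.sin (α * (2 * π)) with hSdef
  have hCS : (C - 1) ^ 2 + S ^ 2 = 0 := by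
    by_contra hne
    have ea : ((C - 1) ^ 2 + S ^ 2) • a = 0 := by
      have h : ((C - 1) ^ 2 + S ^ 2) • a =
          (C - 1) • ((C - 1) • a + S • b) - S • ((-S) • a + (C - 1) • b) := by module
      rw [h, e1, e2]; simp
    have eb : ((C - 1) ^ 2 + S ^ 2) • b = 0 := by
      have h : ((C - 1) ^ 2 + S ^ 2) • b =
          S • ((C - 1) • a + S • b) + (C - 1) • ((-S) • a + (C - 1) • b) := by module
      rw [h, e1, e2]; simp
    exact hab ⟨(smul_eq_zero.mp ea).resolve_left hne, (smul_eq_zero.mp eb).resolve_left hne⟩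
  have hC1 : C = 1 := by
    have h1 : (C - 1) ^ 2 = 0 := by linarith [sq_nonneg S, sq_nonneg (C - 1)]
    have h2 : C - 1 = 0 := by
      by_contra hne
      have h3 : 0 < (C - 1) ^ 2 := by positivity
      linarith [sq_nonneg S]
    linarith
  obtain ⟨k, hk⟩ := (Real.cos_eq_one_iff _).mp hC1
  have h2π : (2 * π : ℝ) ≠ 0 := by positivity
  have hαk : α = (k : ℝ) := (mul_right_cancel₀ h2π hk).symm
  have hkpos : 0 < k := by
    have : (0:ℝ) < (k:ℝ) := hαk ▸ hα
    exact_mod_cast this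
  have htn : ((k.toNat : ℕ) : ℝ) = α := by
    rw [hαk]; exact_mod_cast Int.toNat_of_nonneg hkpos.le
  refine ⟨k.toNat, by omega, htn.symm, a, b, hab, ?_⟩
  intro r hr θ
  rcases eq_or_lt_of_le hr with h0 | hrpos
  · have hz : ((r * Real.cos θ, r * Real.sin θ) : ℝ × ℝ) = 0 := by
      rw [← h0]; simp [Prod.ext_iff]
    rw [hz, hu0, ← h0, zero_pow (by omega : k.toNat ≠ 0), zero_smul]
  · have hx : ((r * Real.cos θ, r * Real.sin θ) : ℝ × ℝ) = r • p θ := by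
      simp [hpdef, Prod.ext_iff]
    rw [hx, hhom r hrpos,
      show u (p θ) = Real.cos (α * θ) • a + Real.sin (α * θ) • b from hgform θ,
      ← htn, Real.rpow_natCast]
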